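/- For every fixed b ≥ 0: lim_{a→0+} ∂J/∂a(a,b) = λμ·c·γ(b)/(α·(q + μ_α·q·θ(b) + λ)²) > 0, and there exists A > 0 such that ∂J/∂a(a,b) < 0 for all a > A. In particular, the supremum of a ↦ J(a,b) over (0,∞) is attained neither at a = 0 nor in the limit a → ∞. -/

import Mathlib

set_option maxHeartbeats 1000000

theorem stmt11 (c α lam q μ k : ℝ)
    (hc : 0 < c) (hα0 : 0 < α) (hα1 : α ≤ 1)
    (hlam : 0 < lam) (hq : 0 < q) (hμ : 0 < μ) (hk : 1 ≤ k)
    (Δ Φ ρ : ℝ)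
    (hΔ : Δ = (c*μ - α*lam - α*q)^2 + 4*α*c*μ*q)
    (hΦ : Φ = (-(c*μ - α*lam - α*q) + Real.sqrt Δ) / (2*α*c))
    (hρ : ρ = (-(c*μ - α*lam - α*q) - Real.sqrt Δ) / (2*α*c))
    (hΦpos : 0 < Φ) (hρneg : ρ < 0)
    (γ θf m : ℝ → ℝ) (D J ψ : ℝ → ℝ → ℝ)
    (hγ : ∀ b, γ b = (Φ - ρ)/(Φ*Real.exp (Φ*b) - ρ*Real.exp (ρ*b)))
    (hθf : ∀ b, θf b = (Real.exp (Φ*b) - Real.exp (ρ*b))/(Φ*Real.exp (Φ*b) - ρ*Real.exp (ρ*b)))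
    (hm : ∀ a, m a = (1 - Real.exp (-(μ/α)*a)*((μ/α)*a + 1))/(μ/α))
    (hD : ∀ a b, D a b = q + (μ/α)*q*θf b + lam*Real.exp (-(μ/α)*a))
    (hJ : ∀ a b, J a b = (c*γ b - lam*k*m a)/(D a b))
    (hψ : ∀ a b, ψ a b = -(a*k*(q + q*(μ/α)*θf b)) + c*γ b + lam*k*(Real.exp (-(μ/α)*a) - 1)/(μ/α)) :
    ∀ b : ℝ, 0 ≤ b →
      Filter.Tendsto (fun a => deriv (fun a' => J a' b) a)
        (nhdsWithin 0 (Set.Ioi 0))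
        (nhds (lam*μ*c*γ b / (α*(q + (μ/α)*q*θf b + lam)^2))) ∧
      0 < lam*μ*c*γ b / (α*(q + (μ/α)*q*θf b + lam)^2) ∧
      (∃ A : ℝ, 0 < A ∧ ∀ a, A < a → deriv (fun a' => J a' b) a < 0) ∧
      (∃ a : ℝ, 0 < a ∧ J 0 b < J a b) ∧
      (∃ L : ℝ, Filter.Tendsto (fun a => J a b) Filter.atTop (nhds L) ∧
        ∃ a : ℝ, 0 < a ∧ L < J a b) := by
  intro b hb
  have hμα0 : 0 < μ/α := div_pos hμ hα0
  set μα := μ/α with hμα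
  -- basic positivity
  have hden : 0 < Φ*Real.exp (Φ*b) - ρ*Real.exp (ρ*b) := by
    have h1 : 0 < Φ*Real.exp (Φ*b) := mul_pos hΦpos (Real.exp_pos _)
    have h2 : ρ*Real.exp (ρ*b) < 0 := mul_neg_of_neg_of_pos hρneg (Real.exp_pos _)
    linarith
  have hγpos : 0 < γ b := by
    rw [hγ]; exact div_pos (by linarith) hden
  have hθnn : 0 ≤ θf b := by
    rw [hθf]
    apply div_nonneg _ hden.le
    have h1 : ρ*b ≤ Φ*b := by nlinarith
    have := Real.exp_le_exp.mpr h1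
    linarith
  have hEpos : 0 < q + μα*q*θf b := by
    have : 0 ≤ μα*q*θf b := mul_nonneg (mul_nonneg hμα0.le hq.le) hθnn
    linarith
  have hDpos : ∀ a : ℝ, 0 < D a b := by
    intro a
    rw [hD]
    have := Real.exp_pos (-μα*a)
    nlinarith
  have hkpos : 0 < k := lt_of_lt_of_le one_pos hk
  -- derivative of exp(-μα x)
  have hexp : ∀ a : ℝ, HasDerivAt (fun x => Real.exp (-μα*x)) (-μα*Real.exp (-μα*a)) a := by
    intro a
    have h := ((hasDerivAt_id a).const_mul (-μα)).exp
    simpa [mul_comm] using h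
  -- derivative of the numerator
  have hfa : ∀ a : ℝ, HasDerivAt (fun x => c*γ b - lam*k*m x)
      (-(lam*k*(μα*a*Real.exp (-μα*a)))) a := by
    intro a
    have h1 : HasDerivAt (fun x : ℝ => μα*x + 1) μα a := by
      simpa using ((hasDerivAt_id a).const_mul μα).add_const 1
    have h2 := (hexp a).mul h1
    have h3 := ((h2.const_sub 1).div_const μα)
    have h4 := (h3.const_mul (lam*k)).const_sub (c*γ b)
    have hfun : (fun x => c*γ b - lam*k*m x)
        = fun x => c*γ b - lam*k*((1 - Real.exp (-μα*x)*(μα*x + 1))/μα) := by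
      funext x; rw [hm]
    rw [hfun]
    refine h4.congr_deriv ?_
    field_simp
    ring
  -- derivative of the denominator
  have hg : ∀ a : ℝ, HasDerivAt (fun x => D x b) (lam*(-μα*Real.exp (-μα*a))) a := by
    intro a
    have hfun : (fun x => D x b) = fun x => q + μα*q*θf b + lam*Real.exp (-μα*x) := by
      funext x; rw [hD]
    rw [hfun]
    exact ((hexp a).const_mul lam).const_add _
  -- derivative of J
  have hJd : ∀ a : ℝ, HasDerivAt (fun a' => J a' b)
      (lam*μα*Real.exp (-μα*a)*ψ a b/(D a b)^2) a := by
    intro a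
    have hD0 : D a b ≠ 0 := (hDpos a).ne'
    have h := (hfa a).div (hg a) hD0
    have hfun : (fun a' => J a' b) = fun a' => (c*γ b - lam*k*m a')/(D a' b) := by
      funext x; rw [hJ]
    rw [hfun]
    refine h.congr_deriv ?_
    rw [hψ, hD, hm]
    rw [hD] at hD0
    field_simp
    ring
  have hde : ∀ a : ℝ, deriv (fun a' => J a' b) a
      = lam*μα*Real.exp (-μα*a)*ψ a b/(D a b)^2 := fun a => (hJd a).deriv
  have hJcont : Continuous (fun a => J a b) := by
    have : Differentiable ℝ (fun a => J a b) := fun a => (hJd a).differentiableAt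
    exact this.continuous
  -- continuity of ψ and D in a
  have hψc : Continuous (fun a => ψ a b) := by
    have hfun : (fun a => ψ a b)
        = fun a => -(a*k*(q + q*μα*θf b)) + c*γ b + lam*k*(Real.exp (-μα*a) - 1)/μα := by
      funext a; rw [hψ]
    rw [hfun]; fun_prop
  have hDc : Continuous (fun a => D a b) := by
    have hfun : (fun a => D a b) = fun a => q + μα*q*θf b + lam*Real.exp (-μα*a) := by
      funext a; rw [hD]
    rw [hfun]; fun_prop
  have hψ0 : ψ 0 b = c*γ b := by
    rw [hψ]; simp
  have hD0b : D 0 b = q + μα*q*θf b + lam := by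
    rw [hD]; simp
  -- the limit value
  have hVeq : lam*μ*c*γ b / (α*(q + μα*q*θf b + lam)^2)
      = lam*μα*Real.exp (-μα*(0:ℝ))*ψ 0 b/(D 0 b)^2 := by
    rw [hψ0, hD0b, show -μα*(0:ℝ) = 0 by ring, Real.exp_zero, hμα]
    have h1 : (0:ℝ) < q + μ/α*q*θf b + lam := by
      have := hEpos; rw [hμα] at this; linarith
    field_simp
  have hVpos : 0 < lam*μ*c*γ b / (α*(q + μα*q*θf b + lam)^2) := by
    apply div_pos
    · exact mul_pos (mul_pos (mul_pos hlam hμ) hc) hγpos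
    · apply mul_pos hα0
      apply pow_pos
      linarith [hEpos]
  -- Part 1: tendsto
  have hT : Filter.Tendsto (fun a => deriv (fun a' => J a' b) a)
      (nhdsWithin 0 (Set.Ioi 0))
      (nhds (lam*μ*c*γ b / (α*(q + μα*q*θf b + lam)^2))) := by
    have hcont : ContinuousAt (fun a => lam*μα*Real.exp (-μα*a)*ψ a b/(D a b)^2) 0 := by
      apply ContinuousAt.div
      · fun_prop
      · fun_prop
      · exact pow_ne_zero 2 (hDpos 0).ne'
    have h1 : Filter.Tendsto (fun a => lam*μα*Real.exp (-μα*a)*ψ a b/(D a b)^2)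
        (nhdsWithin 0 (Set.Ioi 0))
        (nhds (lam*μα*Real.exp (-μα*(0:ℝ))*ψ 0 b/(D 0 b)^2)) :=
      hcont.continuousWithinAt.tendsto
    rw [hVeq]
    simpa only [hde] using h1
  set A : ℝ := c*γ b/(k*(q + q*μα*θf b)) + 1 with hA
  have hE'pos : 0 < k*(q + q*μα*θf b) := by
    apply mul_pos hkpos; nlinarith [hEpos]
  have hApos : 0 < A := by
    have : 0 < c*γ b/(k*(q + q*μα*θf b)) := div_pos (mul_pos hc hγpos) hE'pos
    rw [hA]; linarith
  have hneg : ∀ a, A < a → deriv (fun a' => J a' b) a < 0 := by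
    intro a ha
    have hA' : c*γ b/(k*(q + q*μα*θf b)) < a := by rw [hA] at ha; linarith
    have hapos : 0 < a := lt_trans hApos ha
    have hψneg : ψ a b < 0 := by
      rw [hψ]
      have h1 : c*γ b < a*(k*(q + q*μα*θf b)) := (div_lt_iff₀ hE'pos).mp hA'
      have h2 : Real.exp (-μα*a) < 1 := by
        rw [Real.exp_lt_one_iff]; nlinarith
      have h3 : lam*k*(Real.exp (-μα*a) - 1)/μα < 0 := by
        apply div_neg_of_neg_of_pos _ hμα0
        nlinarith [mul_pos hlam hkpos]
      nlinarith
    rw [hde]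
    apply div_neg_of_neg_of_pos
    · exact mul_neg_of_pos_of_neg (mul_pos (mul_pos hlam hμα0) (Real.exp_pos _)) hψneg
    · exact pow_pos (hDpos a) 2
  refine ⟨hT, hVpos, ⟨A, hApos, hneg⟩, ?_, ?_⟩
  -- Part 4
  · obtain ⟨ε, hε, hEps⟩ : ∃ ε > 0, ∀ a, a ∈ Set.Ioo (0:ℝ) ε →
        0 < deriv (fun a' => J a' b) a := by
      have h := hT.eventually (eventually_gt_nhds hVpos)
      rw [eventually_nhdsWithin_iff, Metric.eventually_nhds_iff] at h
      obtain ⟨ε, hε, h⟩ := h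
      refine ⟨ε, hε, fun a ha => h ?_ ha.1⟩
      rw [Real.dist_eq, sub_zero, abs_of_pos ha.1]
      exact ha.2
    have hmono : StrictMonoOn (fun a => J a b) (Set.Icc 0 (ε/2)) := by
      apply strictMonoOn_of_deriv_pos (convex_Icc _ _) hJcont.continuousOn
      intro x hx
      rw [interior_Icc] at hx
      exact hEps x ⟨hx.1, by linarith [hx.2]⟩
    refine ⟨ε/2, by linarith, ?_⟩
    exact hmono ⟨le_refl 0, by linarith⟩ ⟨by linarith, le_refl _⟩ (by linarith)
  -- Part 5
  · have hT1 : Filter.Tendsto (fun a : ℝ => μα*a) Filter.atTop Filter.atTop :=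
      by simpa using Filter.Tendsto.const_mul_atTop hμα0 (Filter.tendsto_id (α := ℝ))
    have hT2 : Filter.Tendsto (fun a : ℝ => Real.exp (-μα*a)) Filter.atTop (nhds 0) := by
      have h := Real.tendsto_exp_neg_atTop_nhds_zero.comp hT1
      have he : (fun a : ℝ => Real.exp (-μα*a)) = (fun x => Real.exp (-x)) ∘ fun a => μα*a := by
        funext a; simp [Function.comp, neg_mul]
      rw [he]; exact h
    have hT3 : Filter.Tendsto (fun a : ℝ => Real.exp (-μα*a)*(μα*a+1)) Filter.atTop (nhds 0) := by
      have h1 := (Real.tendsto_pow_mul_exp_neg_atTop_nhds_zero 1).comp hT1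
      have h2 : Filter.Tendsto (fun a : ℝ => (μα*a)*Real.exp (-(μα*a)) + Real.exp (-(μα*a)))
          Filter.atTop (nhds 0) := by
        have h2' := h1.add (Real.tendsto_exp_neg_atTop_nhds_zero.comp hT1)
        have he : (fun a : ℝ => (μα*a)*Real.exp (-(μα*a)) + Real.exp (-(μα*a)))
            = ((fun x : ℝ => x^1*Real.exp (-x)) ∘ fun a => μα*a) + ((fun x => Real.exp (-x)) ∘ fun a => μα*a) := by
          funext a; simp [Function.comp]
        rw [he]
        simpa [Pi.add_def, Function.comp_def] using h2'
      have : (fun a : ℝ => Real.exp (-μα*a)*(μα*a+1))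
          = fun a : ℝ => (μα*a)*Real.exp (-(μα*a)) + Real.exp (-(μα*a)) := by
        funext a; rw [neg_mul]; ring
      rw [this]; exact h2
    have hTm : Filter.Tendsto (fun a => m a) Filter.atTop (nhds (1/μα)) := by
      have hfun : (fun a => m a) = fun a => (1 - Real.exp (-μα*a)*(μα*a+1))/μα := by
        funext a; rw [hm]
      rw [hfun]
      have := ((tendsto_const_nhds (x := (1:ℝ))).sub hT3).div_const μα
      simpa using this
    have hTD : Filter.Tendsto (fun a => D a b) Filter.atTop (nhds (q + μα*q*θf b)) := by
      have hfun : (fun a => D a b) = fun a => q + μα*q*θf b + lam*Real.exp (-μα*a) := by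
        funext a; rw [hD]
      rw [hfun]
      have := (tendsto_const_nhds (x := q + μα*q*θf b)).add ((hT2.const_mul lam))
      simpa using this
    set L : ℝ := (c*γ b - lam*k*(1/μα))/(q + μα*q*θf b) with hL
    have hTJ : Filter.Tendsto (fun a => J a b) Filter.atTop (nhds L) := by
      have hfun : (fun a => J a b) = fun a => (c*γ b - lam*k*m a)/(D a b) := by
        funext a; rw [hJ]
      rw [hfun]
      exact (tendsto_const_nhds.sub (hTm.const_mul (lam*k))).div hTD hEpos.ne'
    have hanti : StrictAntiOn (fun a => J a b) (Set.Ici A) := by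
      apply strictAntiOn_of_deriv_neg (convex_Ici _) hJcont.continuousOn
      intro x hx
      rw [interior_Ici] at hx
      exact hneg x hx
    have hle : L ≤ J (A+1) b := by
      apply le_of_tendsto hTJ
      rw [Filter.eventually_atTop]
      refine ⟨A+1, fun a ha => ?_⟩
      rcases eq_or_lt_of_le ha with h | h
      · rw [← h]
      · exact (hanti (Set.mem_Ici.mpr (by linarith)) (Set.mem_Ici.mpr (by linarith)) h).le
    have hlt : J (A+1) b < J A b := by
      exact hanti (le_refl A) (Set.mem_Ici.mpr (by linarith)) (by linarith)
    exact ⟨L, hTJ, A, hApos, lt_of_le_of_lt hle hlt⟩
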